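/- In the N3DM reduction with large constant c (c > n·b + total weight), an allocation has total regret zero if and only if each advertiser receives exactly one slot from each of D₁, D₂, D₃ with base weights summing to b; consequently, zero-regret allocations correspond bijectively to perfect numerical 3-dimensional matchings. -/

import Mathlib

open Finset

lemma n3dm_all_one {n : ℕ} (f : Fin n → ℕ) (h1 : ∀ i, f i ≤ 1)
    (hs : ∑ i, f i = n) : ∀ i, f i = 1 := by
  have h := (Finset.sum_eq_sum_iff_of_le (s := Finset.univ) (f := f) (g := fun _ => 1)
      (fun i _ => h1 i))
  have hn : ∑ _i : Fin n, (1:ℕ) = n := by simp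
  intro i
  exact (h.mp (by rw [hs, hn])) i (Finset.mem_univ i)

def n3dmWt {n : ℕ} (x y z : Fin n → ℕ) (s : Fin 3 × Fin n) : ℕ :=
  if s.1 = 0 then x s.2 else if s.1 = 1 then y s.2 else z s.2

def n3dmCoef : Fin 3 → ℕ := ![1, 3, 9]

theorem n3dm_reduction_zero_regret_iff
    (n : ℕ) (x y z : Fin n → ℕ) (b : ℕ)
    (hb : n * b = (∑ i, x i) + (∑ i, y i) + (∑ i, z i))
    (c : ℝ) (hc : (b : ℝ) + ((∑ i, x i) + (∑ i, y i) + (∑ i, z i) : ℕ) < c)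
    (u δ : ℝ) (hu : 0 < u) (hδ0 : 0 ≤ δ) (hδ1 : δ < 1)
    (inf : Fin 3 × Fin n → ℝ)
    (hinf : ∀ s, inf s = if s.1 = 0 then c + (x s.2 : ℝ)
                         else if s.1 = 1 then 3 * c + (y s.2 : ℝ)
                         else 9 * c + (z s.2 : ℝ))
    (A : Fin 3 × Fin n → Fin n)
    (w : Fin n → ℝ)
    (hw : ∀ i, w i = ∑ s ∈ Finset.univ.filter (fun s => A s = i), inf s)
    (σ : ℝ) (hσ : σ = (b : ℝ) + 13 * c)
    (R : Fin n → ℝ)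
    (hR : ∀ i, R i = if w i < σ then u * (1 - δ * w i / σ)
                     else u * (w i - σ) / σ) :
    (∑ i, R i) = 0 ↔
      ∀ i : Fin n, ∃ j k l : Fin n,
        Finset.univ.filter (fun s => A s = i) =
          {((0 : Fin 3), j), ((1 : Fin 3), k), ((2 : Fin 3), l)} ∧
        x j + y k + z l = b := by
  set T : ℕ := (∑ i, x i) + (∑ i, y i) + (∑ i, z i) with hT
  have hc0 : 0 < c := lt_of_le_of_lt (by positivity) hc
  have hσ0 : 0 < σ := by rw [hσ]; positivity
  set S : Fin n → Finset (Fin 3 × Fin n) :=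
    fun i => Finset.univ.filter (fun s => A s = i) with hS
  -- influence formula
  have hinf' : ∀ s : Fin 3 × Fin n,
      inf s = (n3dmCoef s.1 : ℝ) * c + (n3dmWt x y z s : ℝ) := by
    rintro ⟨g, j⟩
    rw [hinf]
    fin_cases g <;> simp [n3dmCoef, n3dmWt] <;> ring
  -- counts and weights
  set a : Fin 3 → Fin n → ℕ := fun g i => ((S i).filter (fun s => s.1 = g)).card with ha
  set m : Fin n → ℕ := fun i => ∑ s ∈ S i, n3dmCoef s.1 with hm
  set W : Fin n → ℕ := fun i => ∑ s ∈ S i, n3dmWt x y z s with hW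
  -- w decomposition
  have hwi : ∀ i, w i = (m i : ℝ) * c + (W i : ℝ) := by
    intro i
    rw [hw]
    calc ∑ s ∈ S i, inf s
        = ∑ s ∈ S i, ((n3dmCoef s.1 : ℝ) * c + (n3dmWt x y z s : ℝ)) := by
          exact Finset.sum_congr rfl fun s _ => hinf' s
      _ = (∑ s ∈ S i, (n3dmCoef s.1 : ℝ)) * c + ∑ s ∈ S i, (n3dmWt x y z s : ℝ) := by
          rw [Finset.sum_add_distrib, Finset.sum_mul]
      _ = (m i : ℝ) * c + (W i : ℝ) := by
          push_cast [hm, hW]; ring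
  -- m in terms of fiber counts
  have hma : ∀ i, m i = a 0 i * 1 + a 1 i * 3 + a 2 i * 9 := by
    intro i
    have h1 : m i = ∑ g : Fin 3, ∑ s ∈ (S i).filter (fun s => s.1 = g), n3dmCoef s.1 := by
      rw [hm]
      exact (Finset.sum_fiberwise_of_maps_to (fun s _ => Finset.mem_univ s.1) _).symm
    have h2 : ∀ g : Fin 3, ∑ s ∈ (S i).filter (fun s => s.1 = g), n3dmCoef s.1
        = a g i * n3dmCoef g := by
      intro g
      rw [ha]
      rw [Finset.sum_congr rfl (fun s hs => by
        rw [(Finset.mem_filter.mp hs).2])]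
      simp [Finset.sum_const, Nat.smul_one_eq_cast, mul_comm]
    rw [h1, Fin.sum_univ_three, h2, h2, h2]
    simp [n3dmCoef]
  -- each group has n slots in total
  have hslice : ∀ g : Fin 3,
      (Finset.univ.filter fun s : Fin 3 × Fin n => s.1 = g) =
        Finset.univ.map ⟨fun j : Fin n => (g, j), fun p q h => by
          simpa using congrArg Prod.snd h⟩ := by
    intro g
    ext ⟨g', j⟩
    simp [eq_comm, Prod.ext_iff, and_comm]
    exact ⟨fun h => ⟨j, rfl, h.symm⟩, fun ⟨_, _, h⟩ => h.symm⟩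
  have hsum_a : ∀ g : Fin 3, ∑ i, a g i = n := by
    intro g
    have h1 := Finset.card_eq_sum_card_fiberwise
      (s := Finset.univ.filter fun s : Fin 3 × Fin n => s.1 = g)
      (t := Finset.univ) (f := A) (fun s _ => Finset.mem_univ (A s))
    have h2 : ∀ i, ((Finset.univ.filter fun s : Fin 3 × Fin n => s.1 = g).filter
        (fun s => A s = i)) = (S i).filter (fun s => s.1 = g) := by
      intro i
      ext s
      simp [hS, and_comm]
    have hcard : (Finset.univ.filter fun s : Fin 3 × Fin n => s.1 = g).card = n := by
      rw [hslice g]; simp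
    rw [hcard] at h1
    refine Eq.trans ?_ h1.symm
    exact Finset.sum_congr rfl fun i _ => by rw [ha, h2 i]
  -- total weight bound
  have hWT : ∀ i, W i ≤ T := by
    intro i
    rw [hW, hT]
    calc ∑ s ∈ S i, n3dmWt x y z s ≤ ∑ s : Fin 3 × Fin n, n3dmWt x y z s :=
          Finset.sum_le_sum_of_subset (Finset.subset_univ _)
      _ = (∑ i, x i) + (∑ i, y i) + (∑ i, z i) := by
          rw [Fintype.sum_prod_type, Fin.sum_univ_three]; simp [n3dmWt]
  constructor
  · -- forward
    intro hsum
    -- each R i = 0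
    have hR0 : ∀ i, R i = 0 := by
      have hnn : ∀ i ∈ Finset.univ, 0 ≤ R i := by
        intro i _
        rw [hR]
        have hwnn : 0 ≤ w i := by
          rw [hwi]
          have h1 : (0:ℝ) ≤ (m i : ℝ) * c := mul_nonneg (Nat.cast_nonneg _) hc0.le
          have h2 : (0:ℝ) ≤ (W i : ℝ) := Nat.cast_nonneg _
          linarith
        split_ifs with h
        · have h1 : δ * w i < σ := by
            calc δ * w i ≤ 1 * w i := mul_le_mul_of_nonneg_right hδ1.le hwnn
              _ = w i := one_mul _
              _ < σ := h
          have h2 : δ * w i / σ < 1 := (div_lt_one hσ0).mpr h1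
          have h3 : (0:ℝ) ≤ 1 - δ * w i / σ := by linarith
          exact mul_nonneg hu.le h3
        · have h4 : σ ≤ w i := not_lt.mp h
          exact div_nonneg (mul_nonneg hu.le (by linarith)) hσ0.le
      intro i
      exact (Finset.sum_eq_zero_iff_of_nonneg hnn).mp hsum i (Finset.mem_univ i)
    -- w i = σ
    have hwσ : ∀ i, w i = σ := by
      intro i
      have h := hR0 i
      rw [hR] at h
      split_ifs at h with hlt
      · exfalso
        have hwnn : 0 ≤ w i := by
          rw [hwi]
          have h1 : (0:ℝ) ≤ (m i : ℝ) * c := mul_nonneg (Nat.cast_nonneg _) hc0.le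
          have h2 : (0:ℝ) ≤ (W i : ℝ) := Nat.cast_nonneg _
          linarith
        have h1 : δ * w i < σ := by
          calc δ * w i ≤ 1 * w i := mul_le_mul_of_nonneg_right hδ1.le hwnn
            _ = w i := one_mul _
            _ < σ := hlt
        have h2 : δ * w i / σ < 1 := (div_lt_one hσ0).mpr h1
        have h3 := mul_pos hu (by linarith : (0:ℝ) < 1 - δ * w i / σ)
        linarith
      · rcases div_eq_zero_iff.mp h with h' | h'
        · rcases mul_eq_zero.mp h' with h'' | h''
          · exact absurd h'' (ne_of_gt hu)
          · linarith
        · exact absurd h' (ne_of_gt hσ0)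
    -- m i = 13 and W i = b
    have hmW : ∀ i, m i = 13 ∧ W i = b := by
      intro i
      have heq : (m i : ℝ) * c + (W i : ℝ) = (b : ℝ) + 13 * c := by
        rw [← hwi, hwσ, hσ]
      have hWr : (W i : ℝ) ≤ (T : ℝ) := Nat.cast_le.mpr (hWT i)
      have hbT : (b : ℝ) + (T : ℝ) < c := by rw [hT]; exact hc
      have hm13 : m i = 13 := by
        by_contra hne
        rcases Nat.lt_or_ge (m i) 13 with h | h
        · have : (m i : ℝ) ≤ 12 := by exact_mod_cast Nat.le_of_lt_succ h
          have hWnn : (0:ℝ) ≤ (W i : ℝ) := Nat.cast_nonneg _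
          have hbnn : (0:ℝ) ≤ (b : ℝ) := Nat.cast_nonneg _
          have hTnn : (0:ℝ) ≤ (T : ℝ) := Nat.cast_nonneg _
          nlinarith
        · have h14 : 14 ≤ m i := by omega
          have : (14 : ℝ) ≤ (m i : ℝ) := by exact_mod_cast h14
          have hWnn : (0:ℝ) ≤ (W i : ℝ) := Nat.cast_nonneg _
          have hTnn : (0:ℝ) ≤ (T : ℝ) := Nat.cast_nonneg _
          nlinarith
      refine ⟨hm13, ?_⟩
      have : (W i : ℝ) = (b : ℝ) := by
        rw [hm13] at heq; push_cast at heq ⊢; linarith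
      exact_mod_cast this
    -- counting: each fiber has card 1
    have h13 : ∀ i, a 0 i * 1 + a 1 i * 3 + a 2 i * 9 = 13 := by
      intro i; rw [← hma]; exact (hmW i).1
    have ha2 : ∀ i, a 2 i = 1 :=
      n3dm_all_one _ (fun i => by have := h13 i; omega) (hsum_a 2)
    have ha1 : ∀ i, a 1 i = 1 :=
      n3dm_all_one _ (fun i => by have := h13 i; have := ha2 i; omega) (hsum_a 1)
    have ha0 : ∀ i, a 0 i = 1 := by
      intro i; have := h13 i; have := ha2 i; have := ha1 i; omega
    -- extract singleton fibers
    have hsingle : ∀ (g : Fin 3) (i : Fin n), a g i = 1 →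
        ∃ j : Fin n, (S i).filter (fun s => s.1 = g) = {(g, j)} := by
      intro g i hgi
      obtain ⟨s0, hs0⟩ := Finset.card_eq_one.mp hgi
      have hs0mem : s0 ∈ (S i).filter (fun s => s.1 = g) := by
        rw [hs0]; exact Finset.mem_singleton_self s0
      have hfst : s0.1 = g := (Finset.mem_filter.mp hs0mem).2
      exact ⟨s0.2, by rw [hs0, ← hfst]⟩
    intro i
    obtain ⟨j, hj⟩ := hsingle 0 i (ha0 i)
    obtain ⟨k, hk⟩ := hsingle 1 i (ha1 i)
    obtain ⟨l, hl⟩ := hsingle 2 i (ha2 i)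
    have hSi : S i = {((0 : Fin 3), j), ((1 : Fin 3), k), ((2 : Fin 3), l)} := by
      have hcover : S i = ((S i).filter (fun s => s.1 = 0)) ∪
          ((S i).filter (fun s => s.1 = 1)) ∪ ((S i).filter (fun s => s.1 = 2)) := by
        ext s
        simp only [Finset.mem_union, Finset.mem_filter]
        constructor
        · intro hs
          have : s.1 = 0 ∨ s.1 = 1 ∨ s.1 = 2 := by
            obtain ⟨g, j'⟩ := s; fin_cases g <;> simp
          tauto
        · tauto
      rw [hcover, hj, hk, hl]
      ext s
      simp [or_assoc]
    -- weight equation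
    have hWval : W i = x j + y k + z l := by
      rw [hW]
      show ∑ s ∈ S i, n3dmWt x y z s = _
      rw [hSi]
      rw [Finset.sum_insert (by simp), Finset.sum_insert (by simp),
        Finset.sum_singleton]
      simp [n3dmWt]
      omega
    exact ⟨j, k, l, hSi, by rw [← hWval]; exact (hmW i).2⟩
  · -- backward
    intro hstruct
    have hR0 : ∀ i, R i = 0 := by
      intro i
      obtain ⟨j, k, l, hset, hsum⟩ := hstruct i
      have hwσi : w i = σ := by
        rw [hw, hset, Finset.sum_insert (by simp), Finset.sum_insert (by simp),
          Finset.sum_singleton, hinf' ((0 : Fin 3), j), hinf' ((1 : Fin 3), k),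
          hinf' ((2 : Fin 3), l), hσ]
        have hb' : (b : ℝ) = (x j : ℝ) + (y k : ℝ) + (z l : ℝ) := by
          exact_mod_cast congrArg (Nat.cast : ℕ → ℝ) hsum.symm
        norm_num [n3dmCoef, n3dmWt, Fin.ext_iff]
        have h9 : (![1, 3, 9] : Fin 3 → ℕ) 2 = 9 := rfl
        simp only [h9, Nat.cast_ofNat]
        linarith
      rw [hR, hwσi]
      simp [lt_irrefl]
    exact Finset.sum_eq_zero (fun i _ => hR0 i)
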